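/- Let $X,Y \geq 0$ be nonnegative random variables and $r > 0$ such that $\mathbb{P}(X > \lambda,\ Y < \lambda) \leq \lambda^{-r}\int_{\{Y < \lambda\}} Y^r\, d\mathbb{P}$ for all $\lambda > 0$. Then for all $0 < p < r$, $\mathbb{E}[X^p] \leq \frac{r}{r-p}\, \mathbb{E}[Y^p]$. -/

import Mathlib

open MeasureTheory Set
open scoped ENNReal

/-- Good-λ / interpolation-type inequality: if
`P(X > λ, Y < λ) ≤ λ^{-r} ∫_{Y < λ} Y^r dP` for all `λ > 0`, then for all
`0 < p < r`, `E[X^p] ≤ (r/(r-p)) E[Y^p]`. -/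
theorem good_lambda_interpolation {Ω : Type*} [MeasurableSpace Ω] (μ : Measure Ω)
    [IsProbabilityMeasure μ]
    (X Y : Ω → ℝ) (hX : Measurable X) (hY : Measurable Y)
    (hX0 : ∀ ω, 0 ≤ X ω) (hY0 : ∀ ω, 0 ≤ Y ω)
    (r : ℝ) (hr : 0 < r)
    (h : ∀ l : ℝ, 0 < l →
      μ {ω | l < X ω ∧ Y ω < l} ≤
        ENNReal.ofReal (l ^ (-r)) * ∫⁻ ω in {ω | Y ω < l}, ENNReal.ofReal (Y ω ^ r) ∂μ) :
    ∀ p : ℝ, 0 < p → p < r →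
      ∫⁻ ω, ENNReal.ofReal (X ω ^ p) ∂μ ≤
        ENNReal.ofReal (r / (r - p)) * ∫⁻ ω, ENNReal.ofReal (Y ω ^ p) ∂μ := by
  intro p hp hpr
  have hrp : 0 < r - p := by linarith
  have hXnn : 0 ≤ᵐ[μ] X := Filter.Eventually.of_forall hX0
  have hYnn : 0 ≤ᵐ[μ] Y := Filter.Eventually.of_forall hY0
  set EY := ∫⁻ ω, ENNReal.ofReal (Y ω ^ p) ∂μ with hEYdef
  set g : ℝ → ℝ≥0∞ := fun t => ENNReal.ofReal (t ^ (p - 1)) with hg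
  have hgm : Measurable g := (measurable_id.pow_const _).ennreal_ofReal
  set I : ℝ → ℝ≥0∞ := fun t => ∫⁻ ω in {ω | Y ω < t}, ENNReal.ofReal (Y ω ^ r) ∂μ with hI
  -- Layer cake for X and Y
  have hXlc := lintegral_rpow_eq_lintegral_meas_lt_mul μ hXnn hX.aemeasurable hp
  have hYlc := lintegral_rpow_eq_lintegral_meas_le_mul μ hYnn hY.aemeasurable hp
  -- the function F on the product
  set F : ℝ → Ω → ℝ≥0∞ := fun t ω =>
    if Y ω < t then ENNReal.ofReal (t ^ (p - 1 - r)) * ENNReal.ofReal (Y ω ^ r) else 0 with hF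
  have hFm : Measurable (Function.uncurry F) := by
    apply Measurable.ite
    · exact measurableSet_lt (hY.comp measurable_snd) measurable_fst
    · exact ((measurable_fst.pow_const _).ennreal_ofReal).mul
        (((hY.comp measurable_snd).pow_const _).ennreal_ofReal)
    · exact measurable_const
  -- the measure split
  have hsplit : ∀ t : ℝ, μ {a | t < X a} ≤ μ {ω | t < X ω ∧ Y ω < t} + μ {a | t ≤ Y a} := by
    intro t
    refine le_trans (measure_mono ?_) (measure_union_le _ _)
    intro ω hω
    by_cases hc : Y ω < t
    · exact Or.inl ⟨hω, hc⟩
    · exact Or.inr (not_lt.mp hc)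
  -- measurability of the Y-distribution term
  have hmeasY : Measurable fun t : ℝ => μ {a | t ≤ Y a} * g t := by
    refine Measurable.mul ?_ hgm
    exact Antitone.measurable (fun s t hst => measure_mono (fun a ha => hst.trans ha))
  -- main chain
  rw [hXlc]
  have step1 : ∫⁻ t in Ioi 0, μ {a | t < X a} * g t ≤
      (∫⁻ t in Ioi 0, μ {ω | t < X ω ∧ Y ω < t} * g t) +
        ∫⁻ t in Ioi 0, μ {a | t ≤ Y a} * g t := by
    rw [← lintegral_add_right _ hmeasY]
    exact lintegral_mono fun t => by
      exact mul_le_mul_left (hsplit t) _ |>.trans (le_of_eq (add_mul _ _ _))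
  have step2 : ∫⁻ t in Ioi 0, μ {ω | t < X ω ∧ Y ω < t} * g t ≤
      ∫⁻ t in Ioi 0, ∫⁻ ω, F t ω ∂μ := by
    apply lintegral_mono_ae
    filter_upwards [self_mem_ae_restrict (measurableSet_Ioi : MeasurableSet (Ioi (0:ℝ)))]
      with t ht
    have ht : (0:ℝ) < t := ht
    calc μ {ω | t < X ω ∧ Y ω < t} * g t
        ≤ (ENNReal.ofReal (t ^ (-r)) * I t) * g t := mul_le_mul_left (h t ht) _
      _ = ∫⁻ ω, F t ω ∂μ := by
          have hIt : I t = ∫⁻ ω, ({ω | Y ω < t}).indicator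
              (fun ω => ENNReal.ofReal (Y ω ^ r)) ω ∂μ := by
            rw [lintegral_indicator (measurableSet_lt hY measurable_const)]
          rw [hIt, mul_comm _ (g t), ← mul_assoc, ← lintegral_const_mul]
          · apply lintegral_congr
            intro ω
            simp only [hF, Set.indicator_apply, Set.mem_setOf_eq]
            by_cases hc : Y ω < t
            · simp only [hc, if_true]
              rw [← ENNReal.ofReal_mul (Real.rpow_nonneg ht.le _), ← Real.rpow_add ht]
              ring_nf
            · simp [hc]
          · exact Measurable.indicator (hY.pow_const _ |>.ennreal_ofReal)
              (measurableSet_lt hY measurable_const)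
  -- swap and compute the inner integral
  have step3 : ∫⁻ t in Ioi 0, ∫⁻ ω, F t ω ∂μ ≤
      ENNReal.ofReal (1 / (r - p)) * EY := by
    rw [lintegral_lintegral_swap hFm.aemeasurable]
    have inner : ∀ ω, ∫⁻ t in Ioi 0, F t ω ≤ ENNReal.ofReal (1 / (r - p)) *
        ENNReal.ofReal (Y ω ^ p) := by
      intro ω
      have hind : ∀ t : ℝ, F t ω = (Ioi (Y ω)).indicator
          (fun t => ENNReal.ofReal (t ^ (p - 1 - r)) * ENNReal.ofReal (Y ω ^ r)) t := by
        intro t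
        simp only [hF, Set.indicator_apply, Set.mem_Ioi]
      simp_rw [hind]
      rw [lintegral_indicator measurableSet_Ioi, Measure.restrict_restrict measurableSet_Ioi,
        Ioi_inter_Ioi, sup_of_le_left (hY0 ω)]
      rw [lintegral_mul_const _ (by fun_prop : Measurable fun t : ℝ => ENNReal.ofReal (t ^ (p - 1 - r)))]
      rcases eq_or_lt_of_le (hY0 ω) with h0 | h0
      · rw [← h0, Real.zero_rpow hr.ne', ENNReal.ofReal_zero, mul_zero]
        exact zero_le
      · have ha : p - 1 - r < -1 := by linarith
        have hint : ∫⁻ t in Ioi (Y ω), ENNReal.ofReal (t ^ (p - 1 - r)) =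
            ENNReal.ofReal (Y ω ^ (p - r) / (r - p)) := by
          rw [← ofReal_integral_eq_lintegral_ofReal (integrableOn_Ioi_rpow_of_lt ha h0)]
          · rw [integral_Ioi_rpow_of_lt ha h0]
            congr 1
            have h1 : p - 1 - r + 1 = p - r := by ring
            rw [h1, neg_div, show r - p = -(p - r) by ring, div_neg]
          · filter_upwards [self_mem_ae_restrict (measurableSet_Ioi :
              MeasurableSet (Ioi (Y ω)))] with t ht
            exact Real.rpow_nonneg (h0.trans ht).le _
        rw [hint, ← ENNReal.ofReal_mul (by positivity)]
        apply le_of_eq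
        rw [← ENNReal.ofReal_mul (by positivity)]
        congr 1
        rw [div_mul_eq_mul_div, ← Real.rpow_add h0]
        have : p - r + r = p := by ring
        rw [this]
        ring
    calc ∫⁻ ω, (∫⁻ t in Ioi 0, F t ω) ∂μ
        ≤ ∫⁻ ω, (ENNReal.ofReal (1 / (r - p)) * ENNReal.ofReal (Y ω ^ p)) ∂μ :=
          lintegral_mono inner
      _ = ENNReal.ofReal (1 / (r - p)) * EY := lintegral_const_mul _ (hY.pow_const _ |>.ennreal_ofReal)
  -- assemble
  calc ENNReal.ofReal p * ∫⁻ t in Ioi 0, μ {a | t < X a} * g t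
      ≤ ENNReal.ofReal p * ((∫⁻ t in Ioi 0, μ {ω | t < X ω ∧ Y ω < t} * g t) +
          ∫⁻ t in Ioi 0, μ {a | t ≤ Y a} * g t) := mul_le_mul_right step1 _
    _ = ENNReal.ofReal p * (∫⁻ t in Ioi 0, μ {ω | t < X ω ∧ Y ω < t} * g t) +
          ENNReal.ofReal p * ∫⁻ t in Ioi 0, μ {a | t ≤ Y a} * g t := mul_add _ _ _
    _ ≤ ENNReal.ofReal p * (ENNReal.ofReal (1 / (r - p)) * EY) + EY := by
        gcongr
        · exact (step2.trans step3)
        · exact le_of_eq hYlc.symm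
    _ = ENNReal.ofReal (r / (r - p)) * EY := by
        rw [← mul_assoc, ← ENNReal.ofReal_mul hp.le]
        nth_rewrite 2 [show EY = 1 * EY from (one_mul EY).symm]
        rw [← add_mul]
        congr 1
        rw [← ENNReal.ofReal_one, ← ENNReal.ofReal_add (by positivity) zero_le_one]
        congr 1
        field_simp
        ring
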